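/- For every j ∈ [n−1] and every τ ∈ ℝ, the matrix I − τ · e^{(p)}_{(j,j)} belongs to ⟨p⟩^+ if and only if 0 ≤ τ ≤ min(1, 1/r_j). Moreover, at the extreme value τ = min(1, 1/r_j), the (n,j) entry of I − τ · e^{(p)}_{(j,j)} equals the Metropolis acceptance ratio min(1, r_j). -/

import Mathlib

open Matrix

/-- The ratio `r_j := p_j / p_n` for `j ∈ [n-1]`, with the state space `[n]` modeled as
`Fin (m+1)`, the last state `n` as `Fin.last m`, and `[n-1]` as `Fin m` via `Fin.castSucc`. -/
noncomputable def r (m : ℕ) (p : Fin (m + 1) → ℝ) (j : Fin m) : ℝ :=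
  p j.castSucc / p (Fin.last m)

/-- `e^{(p)}_{(j,k)} := (e_j − r_j e_n)(e_k^T − e_n^T)` as an `(m+1) × (m+1)` real matrix. -/
noncomputable def Ep (m : ℕ) (p : Fin (m + 1) → ℝ) (j k : Fin m) :
    Matrix (Fin (m + 1)) (Fin (m + 1)) ℝ :=
  Matrix.vecMulVec
    (fun a => (if a = j.castSucc then (1 : ℝ) else 0) -
      r m p j * (if a = Fin.last m then (1 : ℝ) else 0))
    (fun b => (if b = k.castSucc then (1 : ℝ) else 0) - (if b = Fin.last m then (1 : ℝ) else 0))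

/-- `I − τ e^{(p)}_{(j,j)} ∈ ⟨p⟩⁺` iff `0 ≤ τ ≤ min(1, 1/r_j)`; moreover at
`τ = min(1, 1/r_j)` the `(n, j)` entry of `I − τ e^{(p)}_{(j,j)}` is the Metropolis
acceptance ratio `min(1, r_j)`. -/
theorem stmt11 (m : ℕ) (hm : 1 ≤ m) (p : Fin (m + 1) → ℝ)
    (hp : ∀ a, 0 < p a) (hsum : ∑ a, p a = 1) (j : Fin m) :
    (∀ τ : ℝ,
      ((∀ a b, 0 ≤ ((1 : Matrix (Fin (m + 1)) (Fin (m + 1)) ℝ) - τ • Ep m p j j) a b) ∧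
        ((1 : Matrix (Fin (m + 1)) (Fin (m + 1)) ℝ) - τ • Ep m p j j).mulVec
          (fun _ => (1 : ℝ)) = (fun _ => (1 : ℝ)) ∧
        Matrix.vecMul p ((1 : Matrix (Fin (m + 1)) (Fin (m + 1)) ℝ) - τ • Ep m p j j) = p) ↔
      (0 ≤ τ ∧ τ ≤ min 1 (1 / r m p j))) ∧
    ((1 : Matrix (Fin (m + 1)) (Fin (m + 1)) ℝ) - min 1 (1 / r m p j) • Ep m p j j)
        (Fin.last m) j.castSucc = min 1 (r m p j) := by
  have hjl : j.castSucc ≠ Fin.last m := (Fin.castSucc_lt_last j).ne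
  have hr : 0 < r m p j := div_pos (hp _) (hp _)
  set R := r m p j with hR
  have hRp : R * p (Fin.last m) = p j.castSucc := div_mul_cancel₀ _ (hp _).ne'
  have hentry : ∀ (τ : ℝ) a b,
      ((1 : Matrix (Fin (m + 1)) (Fin (m + 1)) ℝ) - τ • Ep m p j j) a b =
        (if a = b then (1 : ℝ) else 0) -
          τ * (((if a = j.castSucc then (1 : ℝ) else 0) -
            R * (if a = Fin.last m then (1 : ℝ) else 0)) *
            ((if b = j.castSucc then (1 : ℝ) else 0) - (if b = Fin.last m then (1 : ℝ) else 0))) := by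
    intro τ a b
    simp [Ep, Matrix.sub_apply, Matrix.smul_apply, Matrix.one_apply, Matrix.vecMulVec_apply, ← hR]
  have hmul : ∀ τ : ℝ, ((1 : Matrix (Fin (m + 1)) (Fin (m + 1)) ℝ) - τ • Ep m p j j).mulVec
      (fun _ => (1 : ℝ)) = (fun _ => (1 : ℝ)) := by
    intro τ
    funext a
    simp only [Matrix.mulVec, dotProduct, hentry, mul_one]
    rw [Finset.sum_sub_distrib]
    have h1 : ∑ b, (if a = b then (1 : ℝ) else 0) = 1 := by simp
    have h2 : ∑ b, τ * (((if a = j.castSucc then (1 : ℝ) else 0) -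
        R * (if a = Fin.last m then (1 : ℝ) else 0)) *
        ((if b = j.castSucc then (1 : ℝ) else 0) - (if b = Fin.last m then (1 : ℝ) else 0))) = 0 := by
      rw [← Finset.mul_sum, ← Finset.mul_sum, Finset.sum_sub_distrib]
      simp [hjl]
    rw [h1, h2, sub_zero]
  have hvec : ∀ τ : ℝ, Matrix.vecMul p ((1 : Matrix (Fin (m + 1)) (Fin (m + 1)) ℝ) - τ • Ep m p j j)
      = p := by
    intro τ
    funext b
    simp only [Matrix.vecMul, dotProduct, hentry]
    rw [Finset.sum_congr rfl (fun a (_ : a ∈ Finset.univ) => mul_sub (p a) _ _),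
      Finset.sum_sub_distrib]
    have h1 : ∑ a, p a * (if a = b then (1 : ℝ) else 0) = p b := by simp
    have h2 : ∑ a, p a * (τ * (((if a = j.castSucc then (1 : ℝ) else 0) -
        R * (if a = Fin.last m then (1 : ℝ) else 0)) *
        ((if b = j.castSucc then (1 : ℝ) else 0) - (if b = Fin.last m then (1 : ℝ) else 0)))) = 0 := by
      have := Finset.sum_congr rfl (fun a (_ : a ∈ Finset.univ) =>
        (by ring : p a * (τ * (((if a = j.castSucc then (1 : ℝ) else 0) -
          R * (if a = Fin.last m then (1 : ℝ) else 0)) *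
          ((if b = j.castSucc then (1 : ℝ) else 0) - (if b = Fin.last m then (1 : ℝ) else 0)))) =
          (p a * (if a = j.castSucc then (1 : ℝ) else 0) -
            R * (p a * (if a = Fin.last m then (1 : ℝ) else 0))) *
            (τ * ((if b = j.castSucc then (1 : ℝ) else 0) - (if b = Fin.last m then (1 : ℝ) else 0)))))
      rw [this, ← Finset.sum_mul, Finset.sum_sub_distrib, ← Finset.mul_sum]
      simp [hRp]
    rw [h1, h2, sub_zero]
  constructor
  · intro τ
    constructor
    · rintro ⟨hnn, -, -⟩
      have e1 := hnn j.castSucc (Fin.last m)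
      have e2 := hnn j.castSucc j.castSucc
      have e3 := hnn (Fin.last m) (Fin.last m)
      rw [hentry] at e1 e2 e3
      simp [hjl, Ne.symm hjl] at e1 e2 e3
      refine ⟨e1, le_min (by linarith) ?_⟩
      rw [le_div_iff₀ hr]
      linarith
    · rintro ⟨hτ0, hτ1⟩
      have hτa : τ ≤ 1 := hτ1.trans (min_le_left _ _)
      have hτb : τ * R ≤ 1 := by
        have := hτ1.trans (min_le_right _ _)
        rw [le_div_iff₀ hr] at this
        exact this
      refine ⟨?_, hmul τ, hvec τ⟩
      intro a b
      rw [hentry]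
      by_cases h1 : a = j.castSucc <;> by_cases h2 : a = Fin.last m <;>
        by_cases h3 : b = j.castSucc <;> by_cases h4 : b = Fin.last m <;>
        simp_all [hjl, Ne.symm hjl] <;>
        first
        | (split_ifs <;> norm_num)
        | nlinarith [mul_nonneg hτ0 hr.le]
  · rw [hentry]
    simp [hjl, Ne.symm hjl]
    rcases le_total R 1 with h | h
    · have h1 : (1 : ℝ) ≤ R⁻¹ := by
        rw [show R⁻¹ = 1 / R from (one_div R).symm, le_div_iff₀ hr]; linarith
      rw [min_eq_left h1, min_eq_right h, one_mul]
    · have h1 : (R⁻¹ : ℝ) ≤ 1 := by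
        rw [show R⁻¹ = 1 / R from (one_div R).symm, div_le_one hr]; linarith
      rw [min_eq_right h1, min_eq_left h, inv_mul_cancel₀ hr.ne']
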